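/- If two lcsc groups G and H (equipped with left-invariant proper continuous metrics) are coarsely equivalent, then they are measurably coarsely equivalent: there exist Borel measurable coarse Lipschitz maps f : G → H and g : H → G such that f∘g and g∘f are close to the identity maps. -/

import Mathlib

open Filter

def IsCoarseLipschitz {X Y : Type*} [MetricSpace X] [MetricSpace Y] (f : X → Y) : Prop :=
  ∃ a : ℝ → ℝ, Monotone a ∧ Tendsto a atTop atTop ∧
    ∀ x x', dist (f x) (f x') ≤ a (dist x x')

def Close {X Y : Type*} [MetricSpace X] [MetricSpace Y] (f g : X → Y) : Prop :=
  ∃ C : ℝ, ∀ x, dist (f x) (g x) ≤ C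

lemma aux_measurable_approx {X Y : Type*} [MetricSpace X] [SecondCountableTopology X]
    [Nonempty X] [MeasurableSpace X] [BorelSpace X] [MeasurableSpace Y]
    (f : X → Y) :
    ∃ f' : X → Y, Measurable f' ∧ ∀ x : X, ∃ z : X, f' x = f z ∧ dist x z ≤ 1 := by
  classical
  set u := TopologicalSpace.denseSeq X with hu_def
  have hu : DenseRange u := TopologicalSpace.denseRange_denseSeq X
  have hex : ∀ x : X, ∃ n, dist x (u n) < 1 := fun x => hu.exists_dist_lt x one_pos
  refine ⟨fun x => f (u (Nat.find (hex x))), ?_, ?_⟩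
  · have hN : Measurable fun x => Nat.find (hex x) :=
      measurable_find _ fun k =>
        measurableSet_lt (measurable_id.dist measurable_const) measurable_const
    exact (measurable_from_top (f := fun n => f (u n))).comp hN
  · intro x
    exact ⟨u (Nat.find (hex x)), rfl, le_of_lt (Nat.find_spec (hex x))⟩

/-- Coarsely equivalent lcsc groups (with left-invariant proper continuous metrics)
are measurably coarsely equivalent. -/
theorem measurable_coarse_equivalence
    {G H : Type*} [Group G] [MetricSpace G] [IsTopologicalGroup G] [ProperSpace G]
    [SecondCountableTopology G] [MeasurableSpace G] [BorelSpace G]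
    [Group H] [MetricSpace H] [IsTopologicalGroup H] [ProperSpace H]
    [SecondCountableTopology H] [MeasurableSpace H] [BorelSpace H]
    (hGinv : ∀ x g h : G, dist (x * g) (x * h) = dist g h)
    (hHinv : ∀ x g h : H, dist (x * g) (x * h) = dist g h)
    (hce : ∃ f : G → H, IsCoarseLipschitz f ∧ ∃ g : H → G, IsCoarseLipschitz g ∧
      Close (f ∘ g) id ∧ Close (g ∘ f) id) :
    ∃ f : G → H, ∃ g : H → G, Measurable f ∧ Measurable g ∧
      IsCoarseLipschitz f ∧ IsCoarseLipschitz g ∧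
      Close (f ∘ g) id ∧ Close (g ∘ f) id := by
  obtain ⟨f, ⟨a, ha_mono, ha_top, ha⟩, g, ⟨b, hb_mono, hb_top, hb⟩, ⟨C1, hC1⟩, ⟨C2, hC2⟩⟩ := hce
  have : Nonempty G := ⟨1⟩
  have : Nonempty H := ⟨1⟩
  obtain ⟨f', hf'm, hf'⟩ := aux_measurable_approx f
  obtain ⟨g', hg'm, hg'⟩ := aux_measurable_approx g
  -- f' close to f pointwise with bound a 1
  have hff' : ∀ x, dist (f' x) (f x) ≤ a 1 := by
    intro x
    obtain ⟨z, hz, hdz⟩ := hf' x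
    rw [hz]
    calc dist (f z) (f x) ≤ a (dist z x) := ha z x
      _ ≤ a 1 := ha_mono (by rwa [dist_comm])
  have hgg' : ∀ y, dist (g' y) (g y) ≤ b 1 := by
    intro y
    obtain ⟨w, hw, hdw⟩ := hg' y
    rw [hw]
    calc dist (g w) (g y) ≤ b (dist w y) := hb w y
      _ ≤ b 1 := hb_mono (by rwa [dist_comm])
  refine ⟨f', g', hf'm, hg'm, ?_, ?_, ?_, ?_⟩
  · refine ⟨fun t => a (t + 2), fun s t hst => ha_mono (by linarith), ?_, ?_⟩
    · exact ha_top.comp (tendsto_atTop_add_const_right _ 2 tendsto_id)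
    · intro x x'
      obtain ⟨z, hz, hdz⟩ := hf' x
      obtain ⟨z', hz', hdz'⟩ := hf' x'
      rw [hz, hz']
      refine (ha z z').trans (ha_mono ?_)
      have h4 : dist z z' ≤ dist z x + dist x x' + dist x' z' := dist_triangle4 z x x' z'
      have h1 : dist z x ≤ 1 := by rwa [dist_comm]
      linarith [hdz']
  · refine ⟨fun t => b (t + 2), fun s t hst => hb_mono (by linarith), ?_, ?_⟩
    · exact hb_top.comp (tendsto_atTop_add_const_right _ 2 tendsto_id)
    · intro y y'
      obtain ⟨w, hw, hdw⟩ := hg' y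
      obtain ⟨w', hw', hdw'⟩ := hg' y'
      rw [hw, hw']
      refine (hb w w').trans (hb_mono ?_)
      have h4 : dist w w' ≤ dist w y + dist y y' + dist y' w' := dist_triangle4 w y y' w'
      have h1 : dist w y ≤ 1 := by rwa [dist_comm]
      linarith [hdw']
  · refine ⟨a 1 + a (b 1) + C1, fun y => ?_⟩
    have h1 : dist (f' (g' y)) (f (g' y)) ≤ a 1 := hff' _
    have h2 : dist (f (g' y)) (f (g y)) ≤ a (b 1) :=
      (ha _ _).trans (ha_mono (hgg' y))
    have h3 : dist (f (g y)) y ≤ C1 := hC1 y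
    calc dist ((f' ∘ g') y) (id y)
        ≤ dist (f' (g' y)) (f (g' y)) + dist (f (g' y)) (f (g y)) + dist (f (g y)) y :=
          dist_triangle4 _ _ _ _
      _ ≤ a 1 + a (b 1) + C1 := by linarith
  · refine ⟨b 1 + b (a 1) + C2, fun x => ?_⟩
    have h1 : dist (g' (f' x)) (g (f' x)) ≤ b 1 := hgg' _
    have h2 : dist (g (f' x)) (g (f x)) ≤ b (a 1) :=
      (hb _ _).trans (hb_mono (hff' x))
    have h3 : dist (g (f x)) x ≤ C2 := hC2 x
    calc dist ((g' ∘ f') x) (id x)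
        ≤ dist (g' (f' x)) (g (f' x)) + dist (g (f' x)) (g (f x)) + dist (g (f x)) x :=
          dist_triangle4 _ _ _ _
      _ ≤ b 1 + b (a 1) + C2 := by linarith
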